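/- Let (A,e) be an order unit space with Lip norm L, and let ν be any state on A. If d is the diameter of the state space in the metric ρ_L, then for every a ∈ A one has ‖a‖ ≤ (L(a) + |ν(a)|)(1 + d). -/

import Mathlib

/- STATEMENT 3: If (A,e) is an order unit space with Lip norm L, ν a state,
   and d the diameter of the state space in ρ_L, then
   ‖a‖ ≤ (L(a) + |ν(a)|)(1 + d) for all a. -/
theorem norm_le_lip_add_state
    {A : Type*} [NormedAddCommGroup A] [NormedSpace ℝ A] [PartialOrder A]
    (hadd : ∀ a b c : A, a ≤ b → a + c ≤ b + c)
    (hsmul : ∀ (r : ℝ) (a : A), 0 ≤ r → 0 ≤ a → 0 ≤ r • a)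
    (e : A)
    (horder : ∀ a : A, ∃ r : ℝ, a ≤ r • e)
    (harch : ∀ a : A, (∀ r : ℝ, 0 ≤ r → a ≤ r • e) → a ≤ 0)
    (hnorm : ∀ a : A, ‖a‖ = sInf {r : ℝ | -(r • e) ≤ a ∧ a ≤ r • e})
    -- L is a Lip norm (in particular a seminorm vanishing exactly on ℝe)
    (L : A → ℝ)
    (hL0 : ∀ a : A, L a = 0 ↔ ∃ t : ℝ, a = t • e)
    (hLhom : ∀ (t : ℝ) (a : A), L (t • a) = |t| * L a)
    (hLtri : ∀ a b : A, L (a + b) ≤ L a + L b)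
    -- the state space
    (S : Set (A →L[ℝ] ℝ))
    (hS : S = {μ : A →L[ℝ] ℝ | μ e = 1 ∧ ∀ a : A, |μ a| ≤ ‖a‖})
    -- d bounds the ρ_L-diameter of the state space
    (d : ℝ)
    (hd : ∀ μ ∈ S, ∀ lam ∈ S, ∀ a : A, L a ≤ 1 → |μ a - lam a| ≤ d)
    -- ν is a state
    (ν : A →L[ℝ] ℝ) (hν : ν ∈ S) :
    ∀ a : A, ‖a‖ ≤ (L a + |ν a|) * (1 + d) := by
  -- basic facts about ν
  have hνS := hν
  rw [hS] at hνS
  obtain ⟨hνe, hνb⟩ := hνS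
  -- L 0 = 0
  have hL0' : L 0 = 0 := by
    have := hLhom 0 0
    simpa using this
  -- L is nonnegative
  have hLnonneg : ∀ x : A, 0 ≤ L x := by
    intro x
    have h1 := hLtri x (-x)
    have h2 : L (-x) = L x := by
      have := hLhom (-1) x
      simpa using this
    simp only [add_neg_cancel, hL0'] at h1
    linarith
  -- d is nonnegative
  have hdnn : 0 ≤ d := by
    have := hd ν hν ν hν 0 (by rw [hL0']; norm_num)
    simpa using this
  -- order helpers
  have hsub : ∀ u v : A, u ≤ v → 0 ≤ v - u := by
    intro u v h
    have := hadd u v (-u) h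
    simpa [sub_eq_add_neg] using this
  have hle_of_sub : ∀ u v : A, 0 ≤ v - u → u ≤ v := by
    intro u v h
    have := hadd 0 (v - u) u h
    simpa using this
  have haddle : ∀ u v x y : A, u ≤ v → x ≤ y → u + x ≤ v + y := by
    intro u v x y h1 h2
    apply hle_of_sub
    have h3 := hsub u v h1
    have h4 := hsub x y h2
    have h7 : (0:A) ≤ (v - u) + (y - x) := by
      calc (0:A) ≤ (y - x) := h4
      _ = 0 + (y - x) := (zero_add _).symm
      _ ≤ (v - u) + (y - x) := by simpa using hadd 0 (v - u) (y - x) h3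
    have heq : v + y - (u + x) = (v - u) + (y - x) := by abel
    rw [heq]
    exact h7
  -- 1 ≤ ‖e‖
  have hene : (1:ℝ) ≤ ‖e‖ := by
    have := hνb e
    rw [hνe] at this
    simpa using this
  have hene0 : e ≠ 0 := by
    intro h
    rw [h, norm_zero] at hene
    linarith
  -- e is positive
  have hepos : 0 ≤ e := by
    have hor : 0 ≤ e ∨ 0 ≤ -e := by
      -- the set defining ‖e‖ is nonempty (otherwise ‖e‖ = sInf ∅ = 0)
      have hne2 : {r : ℝ | -(r • e) ≤ e ∧ e ≤ r • e}.Nonempty := by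
        by_contra hemp
        rw [Set.not_nonempty_iff_eq_empty] at hemp
        have := hnorm e
        rw [hemp, Real.sInf_empty] at this
        linarith
      obtain ⟨r, hr1, hr2⟩ := hne2
      -- 0 ≤ (r+1) • e and 0 ≤ (r-1) • e
      have h1 : (0:A) ≤ (r + 1) • e := by
        have := hsub _ _ hr1
        have heq : e - -(r • e) = (r + 1) • e := by
          rw [add_smul, one_smul]; abel
        rwa [heq] at this
      have h2 : (0:A) ≤ (r - 1) • e := by
        have := hsub _ _ hr2
        have heq : r • e - e = (r - 1) • e := by
          rw [sub_smul, one_smul]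
        rwa [heq] at this
      rcases lt_or_ge 0 (r + 1) with hc | hc
      · left
        have := hsmul (r + 1)⁻¹ _ (inv_pos.mpr hc).le h1
        rwa [smul_smul, inv_mul_cancel₀ (by linarith), one_smul] at this
      · -- r + 1 ≤ 0, so r - 1 < 0 and 0 ≤ (r-1)•e gives 0 ≤ -e
        right
        have hr1' : r - 1 < 0 := by linarith
        have h1r : (1:ℝ) - r ≠ 0 := by linarith
        have hmm : (1 - r)⁻¹ * (r - 1) = -1 := by field_simp; ring
        have := hsmul (1 - r)⁻¹ _ (inv_pos.mpr (by linarith)).le h2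
        rwa [smul_smul, hmm, neg_one_smul] at this
    rcases hor with h | hmine
    · exact h
    exfalso
    -- the set defining ‖e‖ is unbounded below
    have hsubset : Set.Iic (-1 : ℝ) ⊆ {r : ℝ | -(r • e) ≤ e ∧ e ≤ r • e} := by
      intro r hr
      simp only [Set.mem_Iic] at hr
      constructor
      · apply hle_of_sub
        have heq : e - -(r • e) = (-(r+1)) • (-e) := by
          rw [neg_smul, smul_neg, neg_neg, add_smul, one_smul]; abel
        rw [heq]
        exact hsmul (-(r+1)) (-e) (by linarith) hmine
      · apply hle_of_sub
        have heq : r • e - e = (1 - r) • (-e) := by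
          rw [smul_neg, sub_smul, one_smul]; abel
        rw [heq]
        exact hsmul (1 - r) (-e) (by linarith) hmine
    have hnb : ¬ BddBelow {r : ℝ | -(r • e) ≤ e ∧ e ≤ r • e} := fun h =>
      not_bddBelow_Iic (a := (-1:ℝ)) (h.mono hsubset)
    have := hnorm e
    rw [Real.sInf_of_not_bddBelow hnb] at this
    linarith
  -- multiples of e: 0 ≤ t • e → 0 ≤ t
  have hstrict : ∀ t : ℝ, 0 ≤ t • e → 0 ≤ t := by
    intro t ht
    by_contra hlt
    push_neg at hlt
    have htne : t ≠ 0 := ne_of_lt hlt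
    have h2 : (0:ℝ) ≤ -t⁻¹ := by
      rw [neg_nonneg]
      exact (inv_nonpos).mpr hlt.le
    have hmm : -t⁻¹ * t = -1 := by field_simp
    have h1 := hsmul (-t⁻¹) _ h2 ht
    rw [smul_smul, hmm, neg_one_smul] at h1
    have : e = 0 := le_antisymm (hle_of_sub e 0 (by simpa using h1)) hepos
    exact hene0 this
  -- monotone scaling: r ≤ s → r • e ≤ s • e
  have hmono : ∀ r s : ℝ, r ≤ s → r • e ≤ s • e := by
    intro r s hrs
    apply hle_of_sub
    have heq : s • e - r • e = (s - r) • e := by rw [sub_smul]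
    rw [heq]
    exact hsmul _ _ (by linarith) hepos
  -- scaling inequalities by nonneg scalars
  have hsm : ∀ (c : ℝ) (u v : A), 0 ≤ c → u ≤ v → c • u ≤ c • v := by
    intro c u v hc huv
    apply hle_of_sub
    have heq : c • v - c • u = c • (v - u) := by rw [smul_sub]
    rw [heq]
    exact hsmul _ _ hc (hsub _ _ huv)
  -- the one-sided functional N
  set Nn : A → ℝ := fun x => sInf {r : ℝ | x ≤ r • e} with hNn
  have hSne : ∀ x : A, {r : ℝ | x ≤ r • e}.Nonempty := fun x => horder x
  have hSbdd : ∀ x : A, BddBelow {r : ℝ | x ≤ r • e} := by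
    intro x
    obtain ⟨s, hs⟩ := horder (-x)
    refine ⟨-s, fun r hr => ?_⟩
    have h1 : (0:A) ≤ (r + s) • e := by
      have := haddle _ _ _ _ hr hs
      have heq : r • e + s • e = (r + s) • e := by rw [add_smul]
      calc (0:A) = x + -x := by abel
      _ ≤ r • e + s • e := this
      _ = (r + s) • e := heq
    have := hstrict _ h1
    linarith
  have hNle : ∀ (x : A) (r : ℝ), x ≤ r • e → Nn x ≤ r := fun x r h => csInf_le (hSbdd x) h
  have hmem : ∀ (x : A) (r : ℝ), Nn x < r → x ≤ r • e := by
    intro x r h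
    obtain ⟨r', hr'mem, hr'lt⟩ := exists_lt_of_csInf_lt (hSne x) h
    exact le_trans hr'mem (hmono _ _ hr'lt.le)
  have hNadd : ∀ x y : A, Nn (x + y) ≤ Nn x + Nn y := by
    intro x y
    apply le_of_forall_pos_le_add
    intro ε hε
    have h1 : x ≤ (Nn x + ε/2) • e := hmem x _ (by linarith)
    have h2 : y ≤ (Nn y + ε/2) • e := hmem y _ (by linarith)
    have h3 := haddle _ _ _ _ h1 h2
    have heq : (Nn x + ε/2) • e + (Nn y + ε/2) • e = (Nn x + Nn y + ε) • e := by
      rw [← add_smul]; ring_nf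
    rw [heq] at h3
    exact hNle _ _ h3
  have hNsmul_le : ∀ c : ℝ, 0 < c → ∀ x : A, Nn (c • x) ≤ c * Nn x := by
    intro c hc x
    apply le_of_forall_pos_le_add
    intro ε hε
    have h1 : x ≤ (Nn x + ε/c) • e := hmem x _ (by
      have := div_pos hε hc; linarith)
    have h2 := hsm c _ _ hc.le h1
    rw [smul_smul] at h2
    have := hNle _ _ h2
    calc Nn (c • x) ≤ c * (Nn x + ε/c) := this
    _ = c * Nn x + ε := by field_simp
  have hNsmul : ∀ c : ℝ, 0 < c → ∀ x : A, Nn (c • x) = c * Nn x := by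
    intro c hc x
    refine le_antisymm (hNsmul_le c hc x) ?_
    have := hNsmul_le c⁻¹ (inv_pos.mpr hc) (c • x)
    rw [smul_smul, inv_mul_cancel₀ hc.ne', one_smul] at this
    calc c * Nn x ≤ c * (c⁻¹ * Nn (c • x)) := by
          exact mul_le_mul_of_nonneg_left this hc.le
    _ = Nn (c • x) := by field_simp
  have hN0 : Nn (0:A) = 0 := by
    refine le_antisymm (hNle 0 0 (by simp)) ?_
    apply le_csInf (hSne 0)
    intro r hr
    exact hstrict r hr
  have hNN : ∀ x : A, 0 ≤ Nn x + Nn (-x) := by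
    intro x
    have := hNadd x (-x)
    simp only [add_neg_cancel, hN0] at this
    linarith
  have hNe1 : Nn e ≤ 1 := hNle e 1 (by rw [one_smul])
  have hNnege : Nn (-e) ≤ -1 := hNle (-e) (-1) (by rw [neg_one_smul])
  -- Nn x ≤ ‖x‖
  have hTsub : ∀ x : A, {r : ℝ | -(r • e) ≤ x ∧ x ≤ r • e} ⊆ {r : ℝ | x ≤ r • e} :=
    fun x r hr => hr.2
  have hTne : ∀ x : A, {r : ℝ | -(r • e) ≤ x ∧ x ≤ r • e}.Nonempty := by
    intro x
    obtain ⟨s, hs⟩ := horder x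
    obtain ⟨s', hs'⟩ := horder (-x)
    refine ⟨max s s', ?_, ?_⟩
    · have h1 : -x ≤ (max s s') • e := le_trans hs' (hmono _ _ (le_max_right _ _))
      apply hle_of_sub
      have := hsub _ _ h1
      have heq : x - -((max s s') • e) = (max s s') • e - -x := by abel
      rw [heq]
      exact this
    · exact le_trans hs (hmono _ _ (le_max_left _ _))
  have hNnorm : ∀ x : A, Nn x ≤ ‖x‖ := by
    intro x
    rw [hnorm x]
    exact csInf_le_csInf (hSbdd x) (hTne x) (hTsub x)
  -- ‖x‖ ≤ max (Nn x) (Nn (-x))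
  have hnormmax : ∀ x : A, ‖x‖ ≤ max (Nn x) (Nn (-x)) := by
    intro x
    rw [hnorm x]
    apply le_of_forall_pos_le_add
    intro ε hε
    set t := max (Nn x) (Nn (-x)) + ε with ht
    have h1 : x ≤ t • e := hmem x t (by
      have := le_max_left (Nn x) (Nn (-x)); linarith)
    have h2 : -x ≤ t • e := hmem (-x) t (by
      have := le_max_right (Nn x) (Nn (-x)); linarith)
    have h3 : -(t • e) ≤ x := by
      apply hle_of_sub
      have := hsub _ _ h2
      have heq : x - -(t • e) = t • e - -x := by abel
      rw [heq]; exact this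
    refine csInf_le ?_ ⟨h3, h1⟩
    exact (hSbdd x).mono (hTsub x)
  -- now the main argument
  intro a
  rcases eq_or_ne a 0 with rfl | ha0
  · simp only [norm_zero, map_zero, abs_zero, add_zero, hL0']
    norm_num
  -- choose b = a or -a so that Nn b = max (Nn a) (Nn (-a))
  set b : A := if Nn (-a) ≤ Nn a then a else -a with hb
  have hb0 : b ≠ 0 := by
    rw [hb]; split <;> simpa
  have hbmax : max (Nn a) (Nn (-a)) = Nn b := by
    rw [hb]; split
    · rwa [max_eq_left]
    · rw [max_eq_right (by linarith [lt_of_not_ge ‹¬ Nn (-a) ≤ Nn a›])]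
  -- the partial linear functional on span {b} sending b to Nn b
  have hfdom : ∀ x : (LinearPMap.mkSpanSingleton b (Nn b) hb0 : A →ₗ.[ℝ] ℝ).domain,
      (LinearPMap.mkSpanSingleton b (Nn b) hb0 : A →ₗ.[ℝ] ℝ) x ≤ Nn x := by
    rintro ⟨x, hx⟩
    have hx' : x ∈ Submodule.span ℝ {b} := hx
    obtain ⟨t, rfl⟩ := Submodule.mem_span_singleton.mp hx'
    have happ : (LinearPMap.mkSpanSingleton b (Nn b) hb0 : A →ₗ.[ℝ] ℝ) ⟨t • b, hx⟩
        = t • (Nn b) := LinearPMap.mkSpanSingleton'_apply _ _ _ t _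
    rw [happ]
    show t • (Nn b) ≤ Nn (t • b)
    rcases lt_trichotomy t 0 with htneg | rfl | htpos
    · have heq : t • b = (-t) • (-b) := by rw [neg_smul, smul_neg, neg_neg]
      rw [heq, hNsmul (-t) (by linarith) (-b)]
      have := hNN b
      have hNnb : 0 ≤ Nn b + Nn (-b) := this
      simp only [smul_eq_mul]
      nlinarith
    · simp [hN0]
    · rw [hNsmul t htpos b]
      simp [smul_eq_mul]
  -- Hahn–Banach extension
  obtain ⟨g, hg1, hg2⟩ := exists_extension_of_le_sublinear
    (LinearPMap.mkSpanSingleton b (Nn b) hb0) Nn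
    (fun c hc x => hNsmul c hc x) hNadd hfdom
  -- g is a state
  have hge : g e = 1 := by
    have h1 : g e ≤ 1 := le_trans (hg2 e) hNe1
    have h2 : g (-e) ≤ -1 := le_trans (hg2 (-e)) hNnege
    rw [map_neg] at h2
    linarith
  have hgb : ∀ x : A, |g x| ≤ ‖x‖ := by
    intro x
    rw [abs_le]
    constructor
    · have := le_trans (hg2 (-x)) (hNnorm (-x))
      rw [map_neg, norm_neg] at this
      linarith
    · exact le_trans (hg2 x) (hNnorm x)
  -- g b = Nn b
  have hgbv : g b = Nn b := by
    have hmem' : b ∈ (LinearPMap.mkSpanSingleton b (Nn b) hb0 : A →ₗ.[ℝ] ℝ).domain :=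
      Submodule.mem_span_singleton_self b
    exact (hg1 ⟨b, hmem'⟩).trans (LinearPMap.mkSpanSingleton_apply ℝ ℝ hb0 (Nn b))
  -- package g as a continuous linear map
  set μ : A →L[ℝ] ℝ := LinearMap.mkContinuous g 1 (fun x => by
    rw [one_mul, Real.norm_eq_abs]; exact hgb x) with hμ
  have hμS : μ ∈ S := by
    rw [hS]
    exact ⟨hge, hgb⟩
  have hμa : ∀ x : A, μ x = g x := fun x => rfl
  -- |μ a - ν a| ≤ d * L a
  have hkey : |μ a - ν a| ≤ d * L a := by
    rcases eq_or_lt_of_le (hLnonneg a) with hLa0 | hLapos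
    · obtain ⟨t, rfl⟩ := (hL0 a).mp hLa0.symm
      have h1 : μ (t • e) = t := by rw [map_smul, hμa, hge, smul_eq_mul, mul_one]
      have h2 : ν (t • e) = t := by rw [map_smul, hνe, smul_eq_mul, mul_one]
      rw [h1, h2, sub_self, abs_zero, ← hLa0, mul_zero]
    · have hL1 : L ((L a)⁻¹ • a) ≤ 1 := by
        rw [hLhom, abs_of_pos (inv_pos.mpr hLapos), inv_mul_cancel₀ hLapos.ne']
      have := hd μ hμS ν hν ((L a)⁻¹ • a) hL1
      rw [map_smul, map_smul, smul_eq_mul, smul_eq_mul, ← mul_sub, abs_mul,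
        abs_of_pos (inv_pos.mpr hLapos)] at this
      calc |μ a - ν a| = L a * ((L a)⁻¹ * |μ a - ν a|) := by field_simp
      _ ≤ L a * d := mul_le_mul_of_nonneg_left this hLapos.le
      _ = d * L a := mul_comm _ _
  -- conclude
  have h1 : ‖a‖ ≤ Nn b := le_trans (hnormmax a) (le_of_eq hbmax)
  have h2 : Nn b = g b := hgbv.symm
  have h3 : g b ≤ |g a| := by
    rw [hb]
    split
    · exact le_abs_self _
    · rw [map_neg]
      exact neg_le_abs _
  have h4 : |g a| ≤ |μ a - ν a| + |ν a| := by
    have := abs_sub_abs_le_abs_sub (μ a) (ν a)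
    rw [hμa] at this ⊢
    have habc := abs_add_le (g a - ν a) (ν a)
    simpa using habc
  have h5 : ‖a‖ ≤ d * L a + |ν a| := by
    calc ‖a‖ ≤ Nn b := h1
    _ = g b := h2
    _ ≤ |g a| := h3
    _ ≤ |μ a - ν a| + |ν a| := h4
    _ ≤ d * L a + |ν a| := by linarith [hkey]
  nlinarith [hLnonneg a, abs_nonneg (ν a), hdnn]
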